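/- Let φ, m : ℝ³ → ℝ be smooth functions of (x, y, t) with m_t nowhere vanishing, satisfying the Bogdanov system: (e^{−φ})_{tt} = m_t φ_{xy} − m_x φ_{yt} and m_{tt} e^{−φ} = m_x m_{yt} − m_t m_{xy}. Then the vector fields X₁ = ∂_x − (λ + m_x/m_t)∂_t + λ(φ_t (m_x/m_t) − φ_x)∂_λ and X₂ = ∂_y + (1/λ)(e^{−φ}/m_t)∂_t + ((e^{−φ})_t/m_t)∂_λ, defined on the open set {(x,y,t,λ) ∈ ℝ⁴ : λ ≠ 0}, commute at every point of that set. -/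

import Mathlib

noncomputable section

/-- Partial derivative of `f` along the `i`-th coordinate direction on `ℝⁿ`.
Coordinates on `ℝ³` are `(x, y, t) = (0, 1, 2)`; on `ℝ⁴` they are
`(x, y, t, λ) = (0, 1, 2, 3)`. -/
def pd {n : ℕ} (i : Fin n) (f : (Fin n → ℝ) → ℝ) : (Fin n → ℝ) → ℝ :=
  fun x => fderiv ℝ f x (Pi.single i 1)

/-- Projection `(x, y, t, λ) ↦ (x, y, t)`. -/
def π3 (p : Fin 4 → ℝ) : Fin 3 → ℝ := ![p 0, p 1, p 2]

/-- First Bogdanov equation: `(e^{−φ})_{tt} = m_t φ_{xy} − m_x φ_{yt}`. -/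
def Bogdanov1 (φ m : (Fin 3 → ℝ) → ℝ) : Prop :=
  ∀ x : Fin 3 → ℝ,
    pd 2 (pd 2 fun q => Real.exp (-(φ q))) x
      = pd 2 m x * pd 0 (pd 1 φ) x - pd 0 m x * pd 1 (pd 2 φ) x

/-- Second Bogdanov equation: `m_{tt} e^{−φ} = m_x m_{yt} − m_t m_{xy}`. -/
def Bogdanov2 (φ m : (Fin 3 → ℝ) → ℝ) : Prop :=
  ∀ x : Fin 3 → ℝ,
    pd 2 (pd 2 m) x * Real.exp (-(φ x))
      = pd 0 m x * pd 1 (pd 2 m) x - pd 2 m x * pd 0 (pd 1 m) x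

/-- `X₁ = ∂_x − (λ + m_x/m_t)∂_t + λ(φ_t m_x/m_t − φ_x)∂_λ`. -/
def bogLax1 (φ m : (Fin 3 → ℝ) → ℝ) : (Fin 4 → ℝ) → (Fin 4 → ℝ) :=
  fun p =>
    ![1, 0, -(p 3 + pd 0 m (π3 p) / pd 2 m (π3 p)),
      p 3 * (pd 2 φ (π3 p) * (pd 0 m (π3 p) / pd 2 m (π3 p)) - pd 0 φ (π3 p))]

/-- `X₂ = ∂_y + (1/λ)(e^{−φ}/m_t)∂_t + ((e^{−φ})_t/m_t)∂_λ`. -/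
def bogLax2 (φ m : (Fin 3 → ℝ) → ℝ) : (Fin 4 → ℝ) → (Fin 4 → ℝ) :=
  fun p =>
    ![0, 1, (1 / p 3) * (Real.exp (-(φ (π3 p))) / pd 2 m (π3 p)),
      pd 2 (fun q => Real.exp (-(φ q))) (π3 p) / pd 2 m (π3 p)]

lemma smooth_top {n : ℕ} {f : (Fin n → ℝ) → ℝ} (hf : ContDiff ℝ (⊤ : ℕ∞) f) :
    ContDiff ℝ (⊤ : ℕ∞) (fderiv ℝ f) :=
  hf.fderiv_right (by exact_mod_cast le_top)

lemma pd_contDiff {n : ℕ} (i : Fin n) {f : (Fin n → ℝ) → ℝ}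
    (hf : ContDiff ℝ (⊤ : ℕ∞) f) : ContDiff ℝ (⊤ : ℕ∞) (pd i f) :=
  (smooth_top hf).clm_apply contDiff_const

lemma pd_comm {n : ℕ} (i j : Fin n) {f : (Fin n → ℝ) → ℝ}
    (hf : ContDiff ℝ (⊤ : ℕ∞) f) (x : Fin n → ℝ) :
    pd i (pd j f) x = pd j (pd i f) x := by
  have hdf : ∀ y, HasFDerivAt f (fderiv ℝ f y) y :=
    fun y => (hf.differentiable (by simp) y).hasFDerivAt
  have hd2 : HasFDerivAt (fderiv ℝ f) (fderiv ℝ (fderiv ℝ f) x) x :=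
    ((smooth_top hf).differentiable (by simp) x).hasFDerivAt
  have hsym := second_derivative_symmetric hdf hd2
  have key : ∀ v w : Fin n → ℝ,
      fderiv ℝ (fun y => fderiv ℝ f y w) x v = fderiv ℝ (fderiv ℝ f) x v w := by
    intro v w
    have h : HasFDerivAt (fun y => fderiv ℝ f y w)
        ((ContinuousLinearMap.apply ℝ ℝ w).comp (fderiv ℝ (fderiv ℝ f) x)) x :=
      (ContinuousLinearMap.apply ℝ ℝ w).hasFDerivAt.comp x hd2
    rw [h.fderiv]; rfl
  show fderiv ℝ (fun y => fderiv ℝ f y (Pi.single j 1)) x (Pi.single i 1) = _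
  rw [key, hsym]
  exact (key _ _).symm

lemma pd_exp {φ : (Fin 3 → ℝ) → ℝ} (hφ : ContDiff ℝ (⊤ : ℕ∞) φ) (i : Fin 3) (x : Fin 3 → ℝ) :
    pd i (fun q => Real.exp (-(φ q))) x = -(Real.exp (-(φ x)) * pd i φ x) := by
  have h : HasFDerivAt (fun q => Real.exp (-(φ q)))
      (Real.exp (-(φ x)) • (-(fderiv ℝ φ x))) x :=
    ((hφ.differentiable (by simp) x).hasFDerivAt.neg).exp
  show fderiv ℝ _ x (Pi.single i 1) = _
  rw [h.fderiv]
  simp [pd, smul_eq_mul]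

lemma pd_pd_exp {φ : (Fin 3 → ℝ) → ℝ} (hφ : ContDiff ℝ (⊤ : ℕ∞) φ) (i j : Fin 3) (x : Fin 3 → ℝ) :
    pd i (pd j (fun q => Real.exp (-(φ q)))) x
      = Real.exp (-(φ x)) * (pd i φ x * pd j φ x - pd i (pd j φ) x) := by
  have hrw : pd j (fun q => Real.exp (-(φ q))) = fun q => -(Real.exp (-(φ q)) * pd j φ q) := by
    funext q; exact pd_exp hφ j q
  rw [hrw]
  have hF : HasFDerivAt (fun q => Real.exp (-(φ q)))
      (Real.exp (-(φ x)) • (-(fderiv ℝ φ x))) x :=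
    ((hφ.differentiable (by simp) x).hasFDerivAt.neg).exp
  have hg : HasFDerivAt (pd j φ) (fderiv ℝ (pd j φ) x) x :=
    ((pd_contDiff j hφ).differentiable (by simp) x).hasFDerivAt
  have h : HasFDerivAt (fun q => -(Real.exp (-(φ q)) * pd j φ q)) _ x := (hF.mul hg).neg
  show fderiv ℝ _ x (Pi.single i 1) = _
  rw [h.fderiv]
  simp only [ContinuousLinearMap.neg_apply, ContinuousLinearMap.add_apply,
    ContinuousLinearMap.smul_apply, smul_eq_mul]
  show -(Real.exp (-(φ x)) * pd i (pd j φ) x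
      + pd j φ x * (Real.exp (-(φ x)) * -(pd i φ x))) = _
  ring

def π3L : (Fin 4 → ℝ) →L[ℝ] (Fin 3 → ℝ) :=
  ContinuousLinearMap.pi (fun j : Fin 3 => ContinuousLinearMap.proj (Fin.castSucc j))

lemma π3L_apply (p : Fin 4 → ℝ) : π3L p = π3 p := by
  funext j; fin_cases j <;> rfl

lemma hasFDerivAt_π3 (p : Fin 4 → ℝ) : HasFDerivAt π3 π3L p := by
  have : π3 = ⇑π3L := by funext p; exact (π3L_apply p).symm
  rw [this]; exact π3L.hasFDerivAt

lemma clm_fin3 (L : (Fin 3 → ℝ) →L[ℝ] ℝ) (w : Fin 3 → ℝ) :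
    L w = w 0 * L (Pi.single 0 1) + w 1 * L (Pi.single 1 1) + w 2 * L (Pi.single 2 1) := by
  have hw : w = w 0 • (Pi.single 0 1 : Fin 3 → ℝ) + w 1 • (Pi.single 1 1 : Fin 3 → ℝ)
      + w 2 • (Pi.single 2 1 : Fin 3 → ℝ) := by
    funext j; fin_cases j <;> simp [Pi.single_apply]
  rw [hw]
  simp [smul_eq_mul]

lemma fd3_apply (g : (Fin 3 → ℝ) → ℝ) (q : Fin 3 → ℝ) (w : Fin 4 → ℝ) :
    fderiv ℝ g q (π3L w) = w 0 * pd 0 g q + w 1 * pd 1 g q + w 2 * pd 2 g q := by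
  rw [clm_fin3]; rfl

lemma hcomp3 {g : (Fin 3 → ℝ) → ℝ} (hg : ContDiff ℝ (⊤ : ℕ∞) g) (p : Fin 4 → ℝ) :
    HasFDerivAt (fun p => g (π3 p)) ((fderiv ℝ g (π3 p)).comp π3L) p :=
  ((hg.differentiable (by simp) (π3 p)).hasFDerivAt).comp p (hasFDerivAt_π3 p)

lemma myDiv {c d : (Fin 4 → ℝ) → ℝ} {c' d' : (Fin 4 → ℝ) →L[ℝ] ℝ} {x : Fin 4 → ℝ}
    (hc : HasFDerivAt c c' x) (hd : HasFDerivAt d d' x) (hx : d x ≠ 0) :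
    HasFDerivAt (fun y => c y / d y) (c x • ((-(d x ^ 2)⁻¹) • d') + (d x)⁻¹ • c') x := by
  have heq : (fun y => c y / d y) = fun y => c y * (d y)⁻¹ := by
    funext y; rw [div_eq_mul_inv]
  rw [heq]
  exact hc.mul ((hasDerivAt_inv hx).comp_hasFDerivAt x hd)

set_option maxHeartbeats 2000000 in
/-- For a smooth solution `(φ, m)` of the Bogdanov system with `m_t` nowhere
vanishing, the Lax fields `X₁, X₂` commute at every point of `{λ ≠ 0}`. -/
theorem bogdanov_lax_commute
    (φ m : (Fin 3 → ℝ) → ℝ)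
    (hφ : ContDiff ℝ (⊤ : ℕ∞) φ)
    (hm : ContDiff ℝ (⊤ : ℕ∞) m)
    (hmt : ∀ x : Fin 3 → ℝ, pd 2 m x ≠ 0)
    (h1 : Bogdanov1 φ m)
    (h2 : Bogdanov2 φ m) :
    ∀ p : Fin 4 → ℝ, p 3 ≠ 0 →
      fderiv ℝ (bogLax2 φ m) p (bogLax1 φ m p)
        - fderiv ℝ (bogLax1 φ m) p (bogLax2 φ m p) = 0 := by
  intro p hp
  have hFc : ContDiff ℝ (⊤ : ℕ∞) (fun q => Real.exp (-(φ q))) :=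
    Real.contDiff_exp.comp hφ.neg
  have hT : pd 2 m (π3 p) ≠ 0 := hmt _
  -- basic derivative facts
  have dA := hcomp3 (pd_contDiff 0 hm) p
  have dT := hcomp3 (pd_contDiff 2 hm) p
  have dP0 := hcomp3 (pd_contDiff 0 hφ) p
  have dP2 := hcomp3 (pd_contDiff 2 hφ) p
  have dF := hcomp3 hFc p
  have dG := hcomp3 (pd_contDiff 2 hFc) p
  have dp3 : HasFDerivAt (𝕜 := ℝ) (fun p : Fin 4 → ℝ => p 3)
      (ContinuousLinearMap.proj 3) p := hasFDerivAt_apply 3 p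
  -- component derivatives
  have c12 : HasFDerivAt (fun p => -(p 3 + pd 0 m (π3 p) / pd 2 m (π3 p))) _ p :=
    (dp3.add (myDiv dA dT hT)).neg
  have c13 : HasFDerivAt (fun p => p 3 * (pd 2 φ (π3 p) * (pd 0 m (π3 p) / pd 2 m (π3 p)) - pd 0 φ (π3 p))) _ p :=
    dp3.mul ((dP2.mul (myDiv dA dT hT)).sub dP0)
  have c22 : HasFDerivAt (fun p => 1 / p 3 * (Real.exp (-(φ (π3 p))) / pd 2 m (π3 p))) _ p :=
    (myDiv (hasFDerivAt_const (1:ℝ) p) dp3 hp).mul (myDiv dF dT hT)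
  have c23 := myDiv dG dT hT
  -- component function identification
  have e10 : (fun x => bogLax1 φ m x 0) = fun _ => (1:ℝ) := by
    funext x; simp [bogLax1]
  have e11 : (fun x => bogLax1 φ m x 1) = fun _ => (0:ℝ) := by
    funext x; simp [bogLax1]
  have e12 : (fun x => bogLax1 φ m x 2)
      = fun p => -(p 3 + pd 0 m (π3 p) / pd 2 m (π3 p)) := by
    funext x; simp [bogLax1]
  have e13 : (fun x => bogLax1 φ m x 3)
      = fun p => p 3 * (pd 2 φ (π3 p) * (pd 0 m (π3 p) / pd 2 m (π3 p)) - pd 0 φ (π3 p)) := by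
    funext x; simp [bogLax1]
  have e20 : (fun x => bogLax2 φ m x 0) = fun _ => (0:ℝ) := by
    funext x; simp [bogLax2]
  have e21 : (fun x => bogLax2 φ m x 1) = fun _ => (1:ℝ) := by
    funext x; simp [bogLax2]
  have e22 : (fun x => bogLax2 φ m x 2)
      = fun p => 1 / p 3 * (Real.exp (-(φ (π3 p))) / pd 2 m (π3 p)) := by
    funext x; simp [bogLax2]
  have e23 : (fun x => bogLax2 φ m x 3)
      = fun p => pd 2 (fun q => Real.exp (-(φ q))) (π3 p) / pd 2 m (π3 p) := by
    funext x; simp [bogLax2]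
  have hdiff1 : ∀ i, DifferentiableAt ℝ (fun x => bogLax1 φ m x i) p := by
    intro i
    fin_cases i <;> simp only [Fin.zero_eta, Fin.mk_one, Fin.reduceFinMk]
    · rw [e10]; exact differentiableAt_const _
    · rw [e11]; exact differentiableAt_const _
    · rw [e12]; exact c12.differentiableAt
    · rw [e13]; exact c13.differentiableAt
  have hdiff2 : ∀ i, DifferentiableAt ℝ (fun x => bogLax2 φ m x i) p := by
    intro i
    fin_cases i <;> simp only [Fin.zero_eta, Fin.mk_one, Fin.reduceFinMk]
    · rw [e20]; exact differentiableAt_const _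
    · rw [e21]; exact differentiableAt_const _
    · rw [e22]; exact c22.differentiableAt
    · rw [e23]; exact c23.differentiableAt
  rw [fderiv_pi hdiff1, fderiv_pi hdiff2]
  funext i
  simp only [Pi.sub_apply, Pi.zero_apply, ContinuousLinearMap.pi_apply]
  fin_cases i <;> simp only [Fin.zero_eta, Fin.mk_one, Fin.reduceFinMk]
  · rw [e10, e20]; simp
  · rw [e11, e21]; simp
  · rw [e12, e22, c12.fderiv, c22.fderiv]
    simp only [ContinuousLinearMap.add_apply, ContinuousLinearMap.sub_apply,
      ContinuousLinearMap.neg_apply, ContinuousLinearMap.smul_apply,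
      ContinuousLinearMap.coe_comp', Function.comp_apply, ContinuousLinearMap.proj_apply,
      ContinuousLinearMap.zero_apply, smul_eq_mul, fd3_apply,
      ContinuousLinearMap.comp_apply, bogLax1, bogLax2,
      Matrix.cons_val_zero, Matrix.cons_val_one, Matrix.head_cons,
      Matrix.cons_val_two, Matrix.cons_val_three, Matrix.tail_cons]
    have hE : Real.exp (-(φ (π3 p))) ≠ 0 := (Real.exp_pos _).ne'
    have hm22 : pd 2 (pd 2 m) (π3 p)
        = (pd 0 m (π3 p) * pd 1 (pd 2 m) (π3 p)
            - pd 2 m (π3 p) * pd 0 (pd 1 m) (π3 p)) / Real.exp (-(φ (π3 p))) := by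
      rw [eq_div_iff hE]; exact h2 (π3 p)
    simp only [pd_comm 2 0 hm, pd_comm 1 0 hm, pd_exp hφ, hm22]
    field_simp
    ring
  · rw [e13, e23, c13.fderiv, c23.fderiv]
    simp only [ContinuousLinearMap.add_apply, ContinuousLinearMap.sub_apply,
      ContinuousLinearMap.neg_apply, ContinuousLinearMap.smul_apply,
      ContinuousLinearMap.coe_comp', Function.comp_apply, ContinuousLinearMap.proj_apply,
      ContinuousLinearMap.zero_apply, smul_eq_mul, fd3_apply,
      ContinuousLinearMap.comp_apply, bogLax1, bogLax2,
      Matrix.cons_val_zero, Matrix.cons_val_one, Matrix.head_cons,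
      Matrix.cons_val_two, Matrix.cons_val_three, Matrix.tail_cons]
    have hE : Real.exp (-(φ (π3 p))) ≠ 0 := (Real.exp_pos _).ne'
    have hm22 : pd 2 (pd 2 m) (π3 p)
        = (pd 0 m (π3 p) * pd 1 (pd 2 m) (π3 p)
            - pd 2 m (π3 p) * pd 0 (pd 1 m) (π3 p)) / Real.exp (-(φ (π3 p))) := by
      rw [eq_div_iff hE]; exact h2 (π3 p)
    have hφ22 : pd 2 (pd 2 φ) (π3 p)
        = pd 2 φ (π3 p) * pd 2 φ (π3 p)
          - (pd 2 m (π3 p) * pd 0 (pd 1 φ) (π3 p)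
              - pd 0 m (π3 p) * pd 1 (pd 2 φ) (π3 p)) / Real.exp (-(φ (π3 p))) := by
      have h := h1 (π3 p)
      rw [pd_pd_exp hφ] at h
      field_simp at h ⊢
      linarith
    simp only [pd_comm 2 0 hm, pd_comm 1 0 hm, pd_comm 2 0 hφ, pd_comm 1 0 hφ,
      pd_pd_exp hφ, pd_exp hφ, hm22, hφ22]
    field_simp
    ring
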